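/- arXiv:2407.10161 — 2 statements merged into one kernel-verified Lean document; each statement's English description precedes it below -/
import Mathlib

section
/- Let E and F be homogeneous Moran sets with the same parameters ([0,1], {n_k}, {r_k}), let ν be the uniform Bernoulli measure of F, and let f : E → F satisfy |f(x)−f(y)| ≤ C|x−y| for all x, y ∈ E (C ≥ 1). Then for every k ≥ 0 and every σ ∈ Σ^k, ν(f(E_σ)) ≤ (C+2)/(n_1⋯n_k), i.e. ν(f(E_σ)) ≤ (C+2)·μ(E_σ) where μ is the uniform Bernoulli measure of E. -/
open Set MeasureTheory
open scoped ENNReal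

/-- `σ = (σ₁, …, σ_k)` is a valid word for the sequence `n`: its `i`-th entry
(1-based position `i+1` for 0-based index `i`) is smaller than `n (i+1)`. -/
def IsWord (n : ℕ → ℕ) (σ : List ℕ) : Prop :=
  ∀ i : Fin σ.length, σ.get i < n (i + 1)

/-- A homogeneous Moran structure with parameters `([0,1], {n_k}, {r_k})`:
a family of closed intervals `J σ` indexed by words, with `J ∅ = [0,1]`,
nested, with pairwise disjoint interiors at each level, and
`|J (σ*i)| = r_{k} |J σ|` for `σ` of length `k-1`. -/
structure MoranStructure (n : ℕ → ℕ) (r : ℕ → ℝ) where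
  J : List ℕ → Set ℝ
  J_empty : J [] = Set.Icc 0 1
  J_closedInterval : ∀ σ : List ℕ, IsWord n σ → ∃ a b : ℝ, a ≤ b ∧ J σ = Set.Icc a b
  J_subset : ∀ σ : List ℕ, IsWord n σ → ∀ i < n (σ.length + 1), J (σ ++ [i]) ⊆ J σ
  J_disjointInterior : ∀ σ : List ℕ, IsWord n σ → ∀ i < n (σ.length + 1),
      ∀ j < n (σ.length + 1), i ≠ j →
      interior (J (σ ++ [i])) ∩ interior (J (σ ++ [j])) = ∅
  J_diam : ∀ σ : List ℕ, IsWord n σ → ∀ i < n (σ.length + 1),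
      Metric.diam (J (σ ++ [i])) = r (σ.length + 1) * Metric.diam (J σ)

variable {n : ℕ → ℕ} {r : ℕ → ℝ}

/-- The `k`-th approximation `E_k`: the union of all basic intervals of rank `k`. -/
def MoranStructure.approx (M : MoranStructure n r) (k : ℕ) : Set ℝ :=
  ⋃ σ ∈ {σ : List ℕ | σ.length = k ∧ IsWord n σ}, M.J σ

/-- The homogeneous Moran set `E = ⋂_k E_k`. -/
def MoranStructure.moranSet (M : MoranStructure n r) : Set ℝ :=
  ⋂ k, M.approx k

/-- The total gap of rank `k`: `Δ_k = r_1 ⋯ r_{k-1} (1 - n_k r_k)`. -/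
noncomputable def totalGap (n : ℕ → ℕ) (r : ℕ → ℝ) (k : ℕ) : ℝ :=
  (∏ j ∈ Finset.Icc 1 (k - 1), r j) * (1 - (n k : ℝ) * r k)

/-- Distance between two subsets of `ℝ`: `dist(A,B) = inf {|x-y| : x ∈ A, y ∈ B}`. -/
noncomputable def setDist (A B : Set ℝ) : ℝ :=
  sInf {d : ℝ | ∃ x ∈ A, ∃ y ∈ B, d = |x - y|}

/-- The weak separation condition with constant `η₀`. -/
def MoranStructure.WSC (M : MoranStructure n r) (η₀ : ℝ) : Prop :=
  ∀ σ : List ℕ, IsWord n σ → ∀ i < n (σ.length + 1), ∀ j < n (σ.length + 1), i ≠ j →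
    (M.J (σ ++ [i]) ∩ M.J (σ ++ [j])).Nonempty ∨
      setDist (M.J (σ ++ [i])) (M.J (σ ++ [j])) >
        η₀ * (Metric.diam (M.J σ) -
          ∑ m ∈ Finset.range (n (σ.length + 1)), Metric.diam (M.J (σ ++ [m])))

/-- `μ` is the uniform Bernoulli measure of the Moran structure `M`:
a Borel probability measure concentrated on the Moran set, giving each
cylinder of rank `k` measure `1/(n_1 ⋯ n_k)`. -/
def IsUniformBernoulli (M : MoranStructure n r) (μ : Measure ℝ) : Prop :=
  IsProbabilityMeasure μ ∧ μ M.moranSetᶜ = 0 ∧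
    ∀ σ : List ℕ, IsWord n σ →
      μ (M.J σ ∩ M.moranSet) = 1 / ∏ j ∈ Finset.Icc 1 σ.length, (n j : ℝ≥0∞)

/-- `I` is a connected component of the set `S ⊆ ℝ`. -/
def IsCC (S I : Set ℝ) : Prop := ∃ x ∈ S, I = connectedComponentIn S x

/-- `X` is `δ`-connected: any two points of `X` are joined by a finite chain
of points of `X` with consecutive distances at most `δ`. -/
def DeltaConnected (δ : ℝ) (X : Set ℝ) : Prop :=
  ∀ x ∈ X, ∀ y ∈ X, ∃ (m : ℕ) (z : Fin (m + 1) → ℝ),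
    (∀ i, z i ∈ X) ∧ z 0 = x ∧ z (Fin.last m) = y ∧
      ∀ i : Fin m, |z i.castSucc - z i.succ| ≤ δ
section AuxMoran

variable {n : ℕ → ℕ} {r : ℕ → ℝ}

lemma isWord_nil : IsWord n ([] : List ℕ) := fun i => absurd i.2 (by simp)

lemma isWord_append_iff {σ : List ℕ} {i : ℕ} :
    IsWord n (σ ++ [i]) ↔ IsWord n σ ∧ i < n (σ.length + 1) := by
  constructor
  · intro h
    refine ⟨fun j => ?_, ?_⟩
    · have hj : (j : ℕ) < (σ ++ [i]).length := by simp
      have := h ⟨j, hj⟩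
      simpa [List.get_eq_getElem, List.getElem_append_left j.2] using this
    · have hl : σ.length < (σ ++ [i]).length := by simp
      have := h ⟨σ.length, hl⟩
      simpa [List.get_eq_getElem] using this
  · rintro ⟨h1, h2⟩ j
    rcases lt_or_ge (j : ℕ) σ.length with hj | hj
    · have := h1 ⟨j, hj⟩
      simpa [List.get_eq_getElem, List.getElem_append_left hj] using this
    · have hje : (j : ℕ) = σ.length := by
        have := j.2; simp at this; omega
      simp only [List.get_eq_getElem]
      rw [List.getElem_append_right (by omega)]
      simp [hje]
      exact h2

lemma MoranStructure.exists_Icc (M : MoranStructure n r) :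
    ∀ σ : List ℕ, IsWord n σ → ∃ a b : ℝ, a ≤ b ∧ M.J σ = Set.Icc a b ∧
      b - a = ∏ j ∈ Finset.Icc 1 σ.length, r j := by
  intro σ
  induction σ using List.reverseRecOn with
  | nil => intro _; exact ⟨0, 1, by norm_num, M.J_empty, by simp⟩
  | append_singleton τ i ih =>
    intro h
    obtain ⟨hτ, hi⟩ := isWord_append_iff.mp h
    obtain ⟨a, b, hab, hJ, hd⟩ := ih hτ
    obtain ⟨a', b', hab', hJ'⟩ := M.J_closedInterval (τ ++ [i]) h
    refine ⟨a', b', hab', hJ', ?_⟩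
    have hdi := M.J_diam τ hτ i hi
    rw [hJ', hJ, Real.diam_Icc hab', Real.diam_Icc hab] at hdi
    have hlen : (τ ++ [i]).length = τ.length + 1 := by simp
    rw [hlen, Finset.prod_Icc_succ_top (Nat.le_add_left 1 _)]
    rw [hdi, hd]; ring

lemma MoranStructure.interiors_disjoint (M : MoranStructure n r) :
    ∀ k : ℕ, ∀ σ τ : List ℕ, σ.length = k → τ.length = k → IsWord n σ → IsWord n τ →
      σ ≠ τ → interior (M.J σ) ∩ interior (M.J τ) = ∅ := by
  intro k
  induction k with
  | zero =>
    intro σ τ hσ hτ _ _ hne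
    rw [List.length_eq_zero_iff] at hσ hτ
    exact absurd (hσ.trans hτ.symm) hne
  | succ k ih =>
    intro σ τ hσl hτl hσ hτ hne
    have hσne : σ ≠ [] := by intro h; simp [h] at hσl
    have hτne : τ ≠ [] := by intro h; simp [h] at hτl
    obtain ⟨σ', i, rfl⟩ : ∃ σ' i, σ = σ' ++ [i] :=
      ⟨σ.dropLast, σ.getLast hσne, (List.dropLast_append_getLast hσne).symm⟩
    obtain ⟨τ', j, rfl⟩ : ∃ τ' j, τ = τ' ++ [j] :=
      ⟨τ.dropLast, τ.getLast hτne, (List.dropLast_append_getLast hτne).symm⟩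
    obtain ⟨hσ1, hσ2⟩ := isWord_append_iff.mp hσ
    obtain ⟨hτ1, hτ2⟩ := isWord_append_iff.mp hτ
    have hσ'l : σ'.length = k := by simpa using hσl
    have hτ'l : τ'.length = k := by simpa using hτl
    by_cases hst : σ' = τ'
    · subst hst
      have hij : i ≠ j := fun h => hne (by rw [h])
      exact M.J_disjointInterior σ' hσ1 i hσ2 j hτ2 hij
    · have hd := ih σ' τ' hσ'l hτ'l hσ1 hτ1 hst
      have h1 : interior (M.J (σ' ++ [i])) ⊆ interior (M.J σ') :=
        interior_mono (M.J_subset σ' hσ1 i hσ2)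
      have h2 : interior (M.J (τ' ++ [j])) ⊆ interior (M.J τ') :=
        interior_mono (M.J_subset τ' hτ1 j hτ2)
      exact Set.eq_empty_of_subset_empty (hd ▸ Set.inter_subset_inter h1 h2)

def wordsF (n : ℕ → ℕ) : ℕ → Finset (List ℕ)
  | 0 => {[]}
  | k+1 => ((wordsF n k) ×ˢ Finset.range (n (k+1))).image fun p => p.1 ++ [p.2]

lemma mem_wordsF {k : ℕ} {σ : List ℕ} :
    σ ∈ wordsF n k ↔ σ.length = k ∧ IsWord n σ := by
  induction k generalizing σ with
  | zero =>
    simp only [wordsF, Finset.mem_singleton]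
    constructor
    · rintro rfl; exact ⟨rfl, isWord_nil⟩
    · rintro ⟨h, -⟩; exact List.length_eq_zero_iff.mp h
  | succ k ih =>
    simp only [wordsF, Finset.mem_image, Finset.mem_product, Finset.mem_range]
    constructor
    · rintro ⟨⟨τ, i⟩, ⟨hτ, hi⟩, rfl⟩
      obtain ⟨hl, hw⟩ := ih.mp hτ
      exact ⟨by simp [hl], isWord_append_iff.mpr ⟨hw, by rwa [hl]⟩⟩
    · rintro ⟨hlen, hw⟩
      have hσne : σ ≠ [] := by intro h; simp [h] at hlen
      obtain ⟨σ', i, rfl⟩ : ∃ σ' i, σ = σ' ++ [i] :=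
        ⟨σ.dropLast, σ.getLast hσne, (List.dropLast_append_getLast hσne).symm⟩
      obtain ⟨hw1, hw2⟩ := isWord_append_iff.mp hw
      have hσ'l : σ'.length = k := by simpa using hlen
      exact ⟨(σ', i), ⟨ih.mpr ⟨hσ'l, hw1⟩, by rwa [hσ'l] at hw2⟩, rfl⟩

end AuxMoran

/-- **Claim (cylinder image bound).**
If `f : E → F` is Lipschitz with constant `C ≥ 1` between homogeneous Moran sets
with the same parameters and `ν` is the uniform Bernoulli measure of `F`, then for
every word `σ` of length `k`, `ν(f(E_σ)) ≤ (C+2)/(n_1 ⋯ n_k) = (C+2) μ(E_σ)`. -/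
theorem moran_cylinder_image_bound
    (n : ℕ → ℕ) (r : ℕ → ℝ)
    (hn : ∀ k ≥ 1, 2 ≤ n k)
    (hr : ∀ k ≥ 1, 0 < r k ∧ (n k : ℝ) * r k ≤ 1)
    (ME MF : MoranStructure n r)
    (μ ν : Measure ℝ)
    (hμ : IsUniformBernoulli ME μ) (hν : IsUniformBernoulli MF ν)
    (C : ℝ) (hC : 1 ≤ C) (f : ℝ → ℝ)
    (hfLip : ∀ x ∈ ME.moranSet, ∀ y ∈ ME.moranSet, |f x - f y| ≤ C * |x - y|)
    (hfim : f '' ME.moranSet ⊆ MF.moranSet) :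
    ∀ σ : List ℕ, IsWord n σ →
      ν (f '' (ME.J σ ∩ ME.moranSet)) ≤
          ENNReal.ofReal (C + 2) / ∏ j ∈ Finset.Icc 1 σ.length, (n j : ℝ≥0∞) ∧
      ν (f '' (ME.J σ ∩ ME.moranSet)) ≤
          ENNReal.ofReal (C + 2) * μ (ME.J σ ∩ ME.moranSet) := by
  classical
  intro σ hσ
  set k := σ.length with hk
  set P : ℝ≥0∞ := ∏ j ∈ Finset.Icc 1 k, (n j : ℝ≥0∞) with hP
  set S := f '' (ME.J σ ∩ ME.moranSet) with hS
  have hμval : μ (ME.J σ ∩ ME.moranSet) = 1 / P := hμ.2.2 σ hσ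
  suffices hmain : ν S ≤ ENNReal.ofReal (C + 2) / P by
    refine ⟨hmain, ?_⟩
    rw [hμval, one_div, ← div_eq_mul_inv]
    exact hmain
  by_cases hSne : S.Nonempty
  swap
  · rw [Set.not_nonempty_iff_eq_empty] at hSne
    rw [hSne]
    simp
  set d : ℝ := ∏ j ∈ Finset.Icc 1 k, r j with hd
  have hdpos : 0 < d :=
    Finset.prod_pos fun j hj => (hr j (Finset.mem_Icc.mp hj).1).1
  have hC0 : (0:ℝ) ≤ C := by linarith
  obtain ⟨a0, b0, hab0, hJ0, hd0⟩ := ME.exists_Icc σ hσ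
  rw [← hk, ← hd] at hd0
  have hSub : ME.J σ ∩ ME.moranSet ⊆ ME.moranSet := Set.inter_subset_right
  have hdistS : ∀ x ∈ S, ∀ y ∈ S, |x - y| ≤ C * d := by
    rintro x ⟨u, hu, rfl⟩ y ⟨v, hv, rfl⟩
    have h1 := hfLip u (hSub hu) v (hSub hv)
    have hu' : u ∈ Set.Icc a0 b0 := hJ0 ▸ hu.1
    have hv' : v ∈ Set.Icc a0 b0 := hJ0 ▸ hv.1
    have huv : |u - v| ≤ d := by
      rw [abs_sub_le_iff]
      obtain ⟨h2, h3⟩ := hu'; obtain ⟨h4, h5⟩ := hv'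
      constructor <;> linarith
    exact h1.trans (mul_le_mul_of_nonneg_left huv hC0)
  obtain ⟨p, hp⟩ := id hSne
  have hbddA : BddAbove S := by
    refine ⟨p + C * d, fun x hx => ?_⟩
    have := hdistS x hx p hp
    rw [abs_le] at this
    linarith [this.2]
  have hbddB : BddBelow S := by
    refine ⟨p - C * d, fun x hx => ?_⟩
    have := hdistS p hp x hx
    rw [abs_le] at this
    linarith [this.2]
  set a := sInf S with ha
  set b := sSup S with hb
  have haS : ∀ x ∈ S, a ≤ x := fun x hx => csInf_le hbddB hx
  have hbS : ∀ x ∈ S, x ≤ b := fun x hx => le_csSup hbddA hx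
  have hba : b - a ≤ C * d := by
    have hble : b ≤ C * d + a := by
      refine csSup_le hSne fun x hx => ?_
      have hxa : x - C * d ≤ a := by
        refine le_csInf hSne fun y hy => ?_
        have := hdistS x hx y hy
        rw [abs_le] at this
        linarith [this.2]
      linarith
    linarith
  set T : Finset (List ℕ) := (wordsF n k).filter (fun τ => (MF.J τ ∩ S).Nonempty) with hT
  have hTmem : ∀ τ ∈ T, τ.length = k ∧ IsWord n τ ∧ (MF.J τ ∩ S).Nonempty := by
    intro τ hτ
    rw [hT, Finset.mem_filter] at hτ
    exact ⟨(mem_wordsF.mp hτ.1).1, (mem_wordsF.mp hτ.1).2, hτ.2⟩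
  have hsub : ∀ τ ∈ T, MF.J τ ⊆ Set.Icc (a - d) (b + d) ∧
      volume (interior (MF.J τ)) = ENNReal.ofReal d := by
    intro τ hτ
    obtain ⟨hlen, hw, s, hs1, hs2⟩ := hTmem τ hτ
    obtain ⟨aτ, bτ, habτ, hJτ, hdτ⟩ := MF.exists_Icc τ hw
    rw [hlen, ← hd] at hdτ
    constructor
    · intro x hx
      rw [hJτ] at hx hs1
      have ha1 := haS s hs2
      have hb1 := hbS s hs2
      obtain ⟨h1, h2⟩ := hx
      obtain ⟨h3, h4⟩ := hs1
      constructor <;> linarith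
    · rw [hJτ, interior_Icc, Real.volume_Ioo, hdτ]
  have hdisj : (T : Set (List ℕ)).PairwiseDisjoint fun τ => interior (MF.J τ) := by
    intro τ1 h1 τ2 h2 hne
    have e := MF.interiors_disjoint k τ1 τ2 (hTmem τ1 h1).1 (hTmem τ2 h2).1
      (hTmem τ1 h1).2.1 (hTmem τ2 h2).2.1 hne
    exact Set.disjoint_iff_inter_eq_empty.mpr e
  have hvol : (T.card : ℝ≥0∞) * ENNReal.ofReal d ≤
      ENNReal.ofReal (C + 2) * ENNReal.ofReal d := by
    have h1 : ∑ τ ∈ T, volume (interior (MF.J τ)) = volume (⋃ τ ∈ T, interior (MF.J τ)) :=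
      (measure_biUnion_finset hdisj fun τ _ => isOpen_interior.measurableSet).symm
    have h2 : volume (⋃ τ ∈ T, interior (MF.J τ)) ≤ volume (Set.Icc (a - d) (b + d)) :=
      measure_mono (Set.iUnion₂_subset fun τ hτ => interior_subset.trans (hsub τ hτ).1)
    have h3 : ∑ τ ∈ T, volume (interior (MF.J τ)) = T.card * ENNReal.ofReal d := by
      rw [Finset.sum_congr rfl fun τ hτ => (hsub τ hτ).2]
      simp [Finset.sum_const, nsmul_eq_mul]
    have h4 : volume (Set.Icc (a - d) (b + d)) ≤ ENNReal.ofReal (C + 2) * ENNReal.ofReal d := by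
      rw [Real.volume_Icc, ← ENNReal.ofReal_mul (by linarith)]
      apply ENNReal.ofReal_le_ofReal
      nlinarith
    calc (T.card : ℝ≥0∞) * ENNReal.ofReal d = ∑ τ ∈ T, volume (interior (MF.J τ)) := h3.symm
      _ = volume (⋃ τ ∈ T, interior (MF.J τ)) := h1
      _ ≤ volume (Set.Icc (a - d) (b + d)) := h2
      _ ≤ ENNReal.ofReal (C + 2) * ENNReal.ofReal d := h4
  have hcard : (T.card : ℝ≥0∞) ≤ ENNReal.ofReal (C + 2) := by
    have hne0 : ENNReal.ofReal d ≠ 0 := by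
      simp only [ne_eq, ENNReal.ofReal_eq_zero, not_le]
      exact hdpos
    exact (ENNReal.mul_le_mul_iff_left hne0 ENNReal.ofReal_ne_top).mp hvol
  have hcover : S ⊆ ⋃ τ ∈ T, (MF.J τ ∩ MF.moranSet) := by
    intro x hx
    have hxM : x ∈ MF.moranSet := by
      obtain ⟨u, hu, rfl⟩ := hx
      exact hfim ⟨u, hSub hu, rfl⟩
    have hxk : x ∈ MF.approx k := by
      have := hxM
      simp only [MoranStructure.moranSet, Set.mem_iInter] at this
      exact this k
    simp only [MoranStructure.approx, Set.mem_iUnion, Set.mem_setOf_eq, exists_prop] at hxk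
    obtain ⟨τ, ⟨hlen, hw⟩, hxτ⟩ := hxk
    refine Set.mem_iUnion₂.mpr ⟨τ, ?_, hxτ, hxM⟩
    rw [hT, Finset.mem_filter]
    exact ⟨mem_wordsF.mpr ⟨hlen, hw⟩, ⟨x, hxτ, hx⟩⟩
  calc ν S ≤ ν (⋃ τ ∈ T, (MF.J τ ∩ MF.moranSet)) := measure_mono hcover
    _ ≤ ∑ τ ∈ T, ν (MF.J τ ∩ MF.moranSet) := measure_biUnion_finset_le T _
    _ = ∑ _τ ∈ T, 1 / P := by
        refine Finset.sum_congr rfl fun τ hτ => ?_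
        have h := hν.2.2 τ (hTmem τ hτ).2.1
        rwa [(hTmem τ hτ).1] at h
    _ = T.card * (1 / P) := by simp [Finset.sum_const, nsmul_eq_mul]
    _ ≤ ENNReal.ofReal (C + 2) * (1 / P) := mul_le_mul_left hcard _
    _ = ENNReal.ofReal (C + 2) / P := by rw [one_div, ← div_eq_mul_inv]
end

section
/- Let {J_σ} be a homogeneous Moran structure with parameters ([0,1], {n_k}, {r_k}) and assume n_k·r_k < 1 for all k ≥ 1. Then for every k ≥ 1, each connected component of the k-th approximation E_k is a union of basic intervals J_σ (σ ∈ Σ^k), and it contains at most 2·n_k of them. -/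
open Set MeasureTheory
open scoped ENNReal

variable {n : ℕ → ℕ} {r : ℕ → ℝ}

lemma isWord_append {τ : List ℕ} {i : ℕ} :
    IsWord n (τ ++ [i]) ↔ IsWord n τ ∧ i < n (τ.length + 1) := by
  constructor
  · intro h
    refine ⟨fun m => ?_, ?_⟩
    · have hm : (m : ℕ) < (τ ++ [i]).length := by simp
      have := h ⟨m, hm⟩
      simpa [List.get_eq_getElem, List.getElem_append_left m.isLt] using this
    · have hm : τ.length < (τ ++ [i]).length := by simp
      have := h ⟨τ.length, hm⟩
      simpa [List.get_eq_getElem, List.getElem_concat_length] using this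
  · rintro ⟨h1, h2⟩ m
    have hmlt : (m : ℕ) < τ.length + 1 := by have := m.isLt; simpa using this
    rcases Nat.lt_or_ge (m : ℕ) τ.length with hm | hm
    · have := h1 ⟨m, hm⟩
      simpa [List.get_eq_getElem, List.getElem_append_left hm] using this
    · have hme : (m : ℕ) = τ.length := by omega
      have : (τ ++ [i]).get m = i := by
        simp [List.get_eq_getElem, List.getElem_concat_length hme]
      rw [this, hme]
      exact h2

lemma word_decomp {σ : List ℕ} (hne : σ ≠ []) (hw : IsWord n σ) :
    ∃ τ i, σ = τ ++ [i] ∧ τ.length + 1 = σ.length ∧ IsWord n τ ∧ i < n σ.length := by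
  have heq : σ.dropLast ++ [σ.getLast hne] = σ := List.dropLast_append_getLast hne
  have hw' : IsWord n (σ.dropLast ++ [σ.getLast hne]) := by rw [heq]; exact hw
  obtain ⟨h1, h2⟩ := isWord_append.mp hw'
  have hlen : σ.dropLast.length + 1 = σ.length := by
    conv_rhs => rw [← heq]
    simp
  exact ⟨σ.dropLast, σ.getLast hne, heq.symm, hlen, h1, by rwa [hlen] at h2⟩

lemma finite_words (n : ℕ → ℕ) (k : ℕ) : {σ : List ℕ | σ.length = k ∧ IsWord n σ}.Finite := by
  induction k with
  | zero =>
    apply Set.Finite.subset (Set.finite_singleton ([] : List ℕ))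
    rintro σ ⟨h1, -⟩
    simpa [List.length_eq_zero_iff] using h1
  | succ k ih =>
    apply Set.Finite.subset (((ih.prod (Set.finite_Iio (n (k + 1)))).image
      (fun p : List ℕ × ℕ => p.1 ++ [p.2])))
    rintro σ ⟨h1, h2⟩
    have hne : σ ≠ [] := by intro h; rw [h] at h1; simp at h1
    obtain ⟨τ, i, hσ, hlen, hτ, hi⟩ := word_decomp hne h2
    exact ⟨⟨τ, i⟩, ⟨⟨show τ.length = k by omega, hτ⟩, by rw [h1] at hi; exact hi⟩, hσ.symm⟩

lemma diam_J (M : MoranStructure n r) :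
    ∀ σ : List ℕ, IsWord n σ → Metric.diam (M.J σ) = ∏ j ∈ Finset.Icc 1 σ.length, r j := by
  intro σ
  induction σ using List.reverseRecOn with
  | nil =>
    intro _
    simp [M.J_empty, Real.diam_Icc (zero_le_one (α := ℝ))]
  | append_singleton τ i ih =>
    intro hw
    obtain ⟨h1, h2⟩ := isWord_append.mp hw
    rw [M.J_diam τ h1 i h2, ih h1]
    have hlen : (τ ++ [i]).length = τ.length + 1 := by simp
    rw [hlen, Finset.prod_Icc_succ_top (by omega), mul_comm]

lemma diam_J_pos (M : MoranStructure n r) (hr : ∀ k ≥ 1, 0 < r k ∧ (n k : ℝ) * r k < 1)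
    {σ : List ℕ} (hw : IsWord n σ) : 0 < Metric.diam (M.J σ) := by
  rw [diam_J M σ hw]
  exact Finset.prod_pos fun j hj => (hr j (Finset.mem_Icc.mp hj).1).1

lemma interior_sub {A B : Set ℝ} {a b : ℝ} (hab : a ≤ b) (hA : A = Set.Icc a b)
    {c d : ℝ} (hB : B = Set.Icc c d) (hsub : A ⊆ B) : interior A ⊆ interior B := by
  subst hA hB
  rcases eq_or_lt_of_le hab with h | h
  · subst h; simp
  · obtain ⟨h1, h2⟩ := (Set.Icc_subset_Icc_iff hab).mp hsub
    rw [interior_Icc, interior_Icc]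
    exact Set.Ioo_subset_Ioo h1 h2

lemma disjoint_interiors (M : MoranStructure n r) :
    ∀ k : ℕ, ∀ σ σ' : List ℕ, σ.length = k → σ'.length = k → IsWord n σ → IsWord n σ' →
      σ ≠ σ' → interior (M.J σ) ∩ interior (M.J σ') = ∅ := by
  intro k
  induction k with
  | zero =>
    intro σ σ' h1 h2 _ _ hne
    exact absurd (by rw [List.length_eq_zero_iff.mp h1, List.length_eq_zero_iff.mp h2]) hne
  | succ k ih =>
    intro σ σ' h1 h2 hw hw' hne
    have hne1 : σ ≠ [] := by intro h; rw [h] at h1; simp at h1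
    have hne2 : σ' ≠ [] := by intro h; rw [h] at h2; simp at h2
    obtain ⟨τ, i, hσ, hlen, hτ, hi⟩ := word_decomp hne1 hw
    obtain ⟨τ', j, hσ', hlen', hτ', hj⟩ := word_decomp hne2 hw'
    rw [h1] at hi; rw [h2] at hj
    have hlτ : τ.length = k := by omega
    have hlτ' : τ'.length = k := by omega
    by_cases hττ : τ = τ'
    · subst hττ
      have hij : i ≠ j := by
        intro h; exact hne (by rw [hσ, hσ', h])
      rw [hσ, hσ']
      exact M.J_disjointInterior τ hτ i (by rw [hlτ]; exact hi) j
        (by rw [hlτ]; exact hj) hij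
    · have hmain := ih τ τ' hlτ hlτ' hτ hτ' hττ
      obtain ⟨a, b, hab, hIcc⟩ := M.J_closedInterval σ hw
      obtain ⟨a', b', hab', hIcc'⟩ := M.J_closedInterval σ' hw'
      obtain ⟨c, d, hcd, hIccτ⟩ := M.J_closedInterval τ hτ
      obtain ⟨c', d', hcd', hIccτ'⟩ := M.J_closedInterval τ' hτ'
      have s1 : interior (M.J σ) ⊆ interior (M.J τ) := by
        apply interior_sub hab hIcc hIccτ
        rw [hσ]; exact M.J_subset τ hτ i (by rw [hlτ]; exact hi)
      have s2 : interior (M.J σ') ⊆ interior (M.J τ') := by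
        apply interior_sub hab' hIcc' hIccτ'
        rw [hσ']; exact M.J_subset τ' hτ' j (by rw [hlτ']; exact hj)
      apply Set.eq_empty_of_subset_empty
      calc interior (M.J σ) ∩ interior (M.J σ')
          ⊆ interior (M.J τ) ∩ interior (M.J τ') := Set.inter_subset_inter s1 s2
        _ = ∅ := hmain

lemma key_no_cover (M : MoranStructure n r) (hr : ∀ k ≥ 1, 0 < r k ∧ (n k : ℝ) * r k < 1)
    {k : ℕ} {τ : List ℕ} (hτlen : τ.length + 1 = k) (hτw : IsWord n τ)
    (h : interior (M.J τ) ⊆ M.approx k) : False := by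
  classical
  obtain ⟨a, b, hab, hIcc⟩ := M.J_closedInterval τ hτw
  have hdiam : Metric.diam (M.J τ) = b - a := by rw [hIcc, Real.diam_Icc hab]
  have hdpos : 0 < b - a := by rw [← hdiam]; exact diam_J_pos M hr hτw
  have hk1 : 1 ≤ k := by omega
  -- the finite set of rank-k words
  set W : Finset (List ℕ) := (finite_words n k).toFinset with hW
  -- children of τ
  set C : Finset (List ℕ) := (Finset.range (n k)).image (fun i => τ ++ [i]) with hC
  have hsub : Set.Ioo a b ⊆ ⋃ σ ∈ W, (M.J σ ∩ Set.Ioo a b) := by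
    intro x hx
    have hx' : x ∈ M.approx k := h (by rw [hIcc, interior_Icc]; exact hx)
    obtain ⟨s, hs, hxs⟩ := Set.mem_iUnion₂.mp hx'
    exact Set.mem_iUnion₂.mpr ⟨s, (Set.Finite.mem_toFinset _).mpr hs, hxs, hx⟩
  have hbound : ∀ σ ∈ W, volume (M.J σ ∩ Set.Ioo a b) ≤
      (if σ ∈ C then ENNReal.ofReal (r k * (b - a)) else 0) := by
    intro σ hσW
    obtain ⟨hσlen, hσw⟩ := (Set.Finite.mem_toFinset _).mp hσW
    have hσne : σ ≠ [] := by intro hh; rw [hh] at hσlen; simp at hσlen; omega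
    obtain ⟨ρ, i, hσeq, hρlen, hρw, hi⟩ := word_decomp hσne hσw
    rw [hσlen] at hi
    by_cases hσC : σ ∈ C
    · rw [if_pos hσC]
      obtain ⟨m, hm, hmeq⟩ := Finset.mem_image.mp hσC
      have hdi : Metric.diam (M.J σ) = r k * (b - a) := by
        rw [← hmeq, M.J_diam τ hτw m (by rw [hτlen]; exact Finset.mem_range.mp hm),
          hτlen, hdiam]
      obtain ⟨c, d, hcd, hIccσ⟩ := M.J_closedInterval σ hσw
      have : volume (M.J σ) = ENNReal.ofReal (r k * (b - a)) := by
        rw [hIccσ, Real.volume_Icc, ← hdi, hIccσ, Real.diam_Icc hcd]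
      calc volume (M.J σ ∩ Set.Ioo a b) ≤ volume (M.J σ) :=
            measure_mono Set.inter_subset_left
        _ ≤ _ := this.le
    · rw [if_neg hσC]
      -- ρ ≠ τ
      have hρτ : ρ ≠ τ := by
        intro hh
        exact hσC (Finset.mem_image.mpr ⟨i, Finset.mem_range.mpr hi,
          by rw [← hh, ← hσeq]⟩)
      have hdisj := disjoint_interiors M τ.length ρ τ (by omega) rfl hρw hτw hρτ
      obtain ⟨c, d, hcd, hIccσ⟩ := M.J_closedInterval σ hσw
      obtain ⟨c', d', hcd', hIccρ⟩ := M.J_closedInterval ρ hρw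
      have hsub2 : interior (M.J σ) ⊆ interior (M.J ρ) := by
        apply interior_sub hcd hIccσ hIccρ
        rw [hσeq]
        exact M.J_subset ρ hρw i (by rw [hρlen, hσlen]; exact hi)
      have hdisj2 : Set.Ioo c d ∩ Set.Ioo a b = ∅ := by
        apply Set.eq_empty_of_subset_empty
        calc Set.Ioo c d ∩ Set.Ioo a b
            ⊆ interior (M.J ρ) ∩ interior (M.J τ) := by
              apply Set.inter_subset_inter
              · rw [← interior_Icc, ← hIccσ]; exact hsub2
              · rw [hIcc, interior_Icc]
          _ = ∅ := hdisj
      have hss : M.J σ ∩ Set.Ioo a b ⊆ ({c, d} : Set ℝ) := by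
        rintro x ⟨hx1, hx2⟩
        rw [hIccσ] at hx1
        simp only [Set.mem_insert_iff, Set.mem_singleton_iff]
        rcases eq_or_lt_of_le hx1.1 with hh | hh
        · exact Or.inl hh.symm
        rcases eq_or_lt_of_le hx1.2 with hh' | hh'
        · exact Or.inr hh'
        exfalso
        exact absurd (Set.mem_inter (Set.mem_Ioo.mpr ⟨hh, hh'⟩) hx2) (by rw [hdisj2]; exact notMem_empty x)
      calc volume (M.J σ ∩ Set.Ioo a b) ≤ volume ({c, d} : Set ℝ) := measure_mono hss
        _ = 0 := ((Set.finite_singleton d).insert c).measure_zero volume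
  have h1 : volume (Set.Ioo a b) ≤ ∑ σ ∈ W, volume (M.J σ ∩ Set.Ioo a b) :=
    le_trans (measure_mono hsub) (measure_biUnion_finset_le W _)
  have h2 : ∑ σ ∈ W, volume (M.J σ ∩ Set.Ioo a b) ≤
      (n k : ℝ≥0∞) * ENNReal.ofReal (r k * (b - a)) := by
    calc ∑ σ ∈ W, volume (M.J σ ∩ Set.Ioo a b)
        ≤ ∑ σ ∈ W, (if σ ∈ C then ENNReal.ofReal (r k * (b - a)) else 0) :=
          Finset.sum_le_sum hbound
      _ = ∑ σ ∈ W ∩ C, ENNReal.ofReal (r k * (b - a)) := Finset.sum_ite_mem W C _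
      _ = (W ∩ C).card • ENNReal.ofReal (r k * (b - a)) := Finset.sum_const _
      _ ≤ (n k : ℝ≥0∞) * ENNReal.ofReal (r k * (b - a)) := by
          rw [nsmul_eq_mul]
          apply mul_le_mul_left
          norm_cast
          calc (W ∩ C).card ≤ C.card := Finset.card_le_card inf_le_right
            _ ≤ (Finset.range (n k)).card := Finset.card_image_le
            _ = n k := Finset.card_range _
  rw [Real.volume_Ioo] at h1
  have h3 : (n k : ℝ≥0∞) * ENNReal.ofReal (r k * (b - a)) < ENNReal.ofReal (b - a) := by
    rw [← ENNReal.ofReal_natCast, ← ENNReal.ofReal_mul (by positivity)]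
    rw [ENNReal.ofReal_lt_ofReal_iff hdpos]
    have := (hr k hk1).2
    have hrpos := (hr k hk1).1
    nlinarith
  exact absurd (lt_of_le_of_lt (le_trans h1 h2) h3) (lt_irrefl _)

/-- **Components are unions of few basic intervals.** If `n_k r_k < 1` for all `k`,
then every connected component of the `k`-th approximation `E_k` is the union of
the basic intervals of rank `k` it contains, and there are at most `2 n_k` of them. -/
theorem moran_component_union_basic_intervals
    (n : ℕ → ℕ) (r : ℕ → ℝ)
    (hn : ∀ k ≥ 1, 2 ≤ n k)
    (hr : ∀ k ≥ 1, 0 < r k ∧ (n k : ℝ) * r k < 1)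
    (M : MoranStructure n r) :
    ∀ k ≥ 1, ∀ I : Set ℝ, IsCC (M.approx k) I →
      I = (⋃ σ ∈ {σ : List ℕ | σ.length = k ∧ IsWord n σ ∧ M.J σ ⊆ I}, M.J σ) ∧
      {σ : List ℕ | σ.length = k ∧ IsWord n σ ∧ M.J σ ⊆ I}.Finite ∧
      {σ : List ℕ | σ.length = k ∧ IsWord n σ ∧ M.J σ ⊆ I}.ncard ≤ 2 * n k := by
  classical
  intro k hk I hI
  obtain ⟨x₀, hx₀, rfl⟩ := hI
  set I : Set ℝ := connectedComponentIn (M.approx k) x₀ with hIdef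
  have hIE : I ⊆ M.approx k := connectedComponentIn_subset _ _
  -- Part 1
  have hpart1 : I = ⋃ σ ∈ {σ : List ℕ | σ.length = k ∧ IsWord n σ ∧ M.J σ ⊆ I}, M.J σ := by
    apply Set.Subset.antisymm
    · intro x hx
      obtain ⟨σ, hσ, hxσ⟩ := Set.mem_iUnion₂.mp (hIE hx)
      obtain ⟨hσlen, hσw⟩ := hσ
      obtain ⟨a, b, hab, hIcc⟩ := M.J_closedInterval σ hσw
      have hpre : IsPreconnected (M.J σ) := by rw [hIcc]; exact isPreconnected_Icc
      have hsubE : M.J σ ⊆ M.approx k :=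
        Set.subset_biUnion_of_mem (show σ ∈ {σ : List ℕ | σ.length = k ∧ IsWord n σ}
          from ⟨hσlen, hσw⟩)
      have heq := connectedComponentIn_eq (F := M.approx k) (x := x₀) hx
      have hsubI : M.J σ ⊆ I := by
        rw [hIdef, heq]
        exact hpre.subset_connectedComponentIn hxσ hsubE
      exact Set.mem_iUnion₂.mpr ⟨σ, ⟨hσlen, hσw, hsubI⟩, hxσ⟩
    · exact Set.iUnion₂_subset fun σ hσ => hσ.2.2
  have hfin : {σ : List ℕ | σ.length = k ∧ IsWord n σ ∧ M.J σ ⊆ I}.Finite :=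
    (finite_words n k).subset fun σ hσ => ⟨hσ.1, hσ.2.1⟩
  refine ⟨hpart1, hfin, ?_⟩
  -- rank (k-1) intervals meeting I
  set T : Set (List ℕ) :=
    {τ : List ℕ | τ.length + 1 = k ∧ IsWord n τ ∧ (M.J τ ∩ I).Nonempty} with hTdef
  have hTfin : T.Finite :=
    (finite_words n (k - 1)).subset fun τ hτ => ⟨by have := hτ.1; omega, hτ.2.1⟩
  have hIpre : IsPreconnected I := isPreconnected_connectedComponentIn
  have hIord : I.OrdConnected := hIpre.ordConnected
  have hIccT : ∀ τ ∈ T, M.J τ = Set.Icc (sInf (M.J τ)) (sSup (M.J τ)) ∧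
      sInf (M.J τ) < sSup (M.J τ) := by
    intro τ hτ
    obtain ⟨a, b, hab, hIcc⟩ := M.J_closedInterval τ hτ.2.1
    have hd : 0 < Metric.diam (M.J τ) := diam_J_pos M hr hτ.2.1
    rw [hIcc, Real.diam_Icc hab] at hd
    rw [hIcc, csInf_Icc hab, csSup_Icc hab]
    exact ⟨rfl, by linarith⟩
  have hsep : ∀ τ ∈ T, ∀ τ' ∈ T, τ ≠ τ' →
      sSup (M.J τ) ≤ sInf (M.J τ') ∨ sSup (M.J τ') ≤ sInf (M.J τ) := by
    intro τ hτ τ' hτ' hne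
    obtain ⟨hEq, hlt⟩ := hIccT τ hτ
    obtain ⟨hEq', hlt'⟩ := hIccT τ' hτ'
    by_contra hcon
    push_neg at hcon
    obtain ⟨h1, h2⟩ := hcon
    have hdisj := disjoint_interiors M (k - 1) τ τ'
      (by have := hτ.1; omega) (by have := hτ'.1; omega) hτ.2.1 hτ'.2.1 hne
    set x : ℝ := (max (sInf (M.J τ)) (sInf (M.J τ')) +
      min (sSup (M.J τ)) (sSup (M.J τ'))) / 2 with hxdef
    have hmm : max (sInf (M.J τ)) (sInf (M.J τ')) <
        min (sSup (M.J τ)) (sSup (M.J τ')) := by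
      rw [max_lt_iff, lt_min_iff, lt_min_iff]
      exact ⟨⟨hlt, h2⟩, ⟨h1, hlt'⟩⟩
    have hx1 : x ∈ interior (M.J τ) := by
      rw [hEq, interior_Icc]
      constructor
      · have := le_max_left (sInf (M.J τ)) (sInf (M.J τ'))
        have := min_le_left (sSup (M.J τ)) (sSup (M.J τ'))
        rw [hxdef]; linarith
      · have := le_max_left (sInf (M.J τ)) (sInf (M.J τ'))
        have := min_le_left (sSup (M.J τ)) (sSup (M.J τ'))
        rw [hxdef]; linarith
    have hx2 : x ∈ interior (M.J τ') := by
      rw [hEq', interior_Icc]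
      constructor
      · have := le_max_right (sInf (M.J τ)) (sInf (M.J τ'))
        have := min_le_right (sSup (M.J τ)) (sSup (M.J τ'))
        rw [hxdef]; linarith
      · have := le_max_right (sInf (M.J τ)) (sInf (M.J τ'))
        have := min_le_right (sSup (M.J τ)) (sSup (M.J τ'))
        rw [hxdef]; linarith
    exact absurd (Set.mem_inter hx1 hx2) (by rw [hdisj]; exact Set.notMem_empty x)
  have hcore : ∀ τ₁ ∈ T, ∀ τ₂ ∈ T, ∀ τ₃ ∈ T, τ₁ ≠ τ₂ → τ₂ ≠ τ₃ → τ₁ ≠ τ₃ →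
      sInf (M.J τ₁) < sInf (M.J τ₂) → sInf (M.J τ₂) < sInf (M.J τ₃) → False := by
    intro τ₁ h1 τ₂ h2 τ₃ h3 hne12 hne23 hne13 hlt12 hlt23
    obtain ⟨hEq1, hab1⟩ := hIccT τ₁ h1
    obtain ⟨hEq2, hab2⟩ := hIccT τ₂ h2
    obtain ⟨hEq3, hab3⟩ := hIccT τ₃ h3
    have hs12 : sSup (M.J τ₁) ≤ sInf (M.J τ₂) := by
      rcases hsep τ₁ h1 τ₂ h2 hne12 with h | h
      · exact h
      · linarith
    have hs23 : sSup (M.J τ₂) ≤ sInf (M.J τ₃) := by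
      rcases hsep τ₂ h2 τ₃ h3 hne23 with h | h
      · exact h
      · linarith
    obtain ⟨p, hpJ, hpI⟩ := h1.2.2
    obtain ⟨q, hqJ, hqI⟩ := h3.2.2
    have hp : p ≤ sSup (M.J τ₁) := by rw [hEq1] at hpJ; exact hpJ.2
    have hq : sInf (M.J τ₃) ≤ q := by rw [hEq3] at hqJ; exact hqJ.1
    have hIoosub : interior (M.J τ₂) ⊆ M.approx k := by
      rw [hEq2, interior_Icc]
      intro x hx
      have hxI : x ∈ I :=
        hIord.out hpI hqI ⟨by linarith [hx.1], by linarith [hx.2]⟩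
      exact hIE hxI
    exact key_no_cover M hr h2.1 h2.2.1 hIoosub
  have hT2 : T.ncard ≤ 2 := by
    by_contra hcon
    push_neg at hcon
    obtain ⟨τ₁, h1, τ₂, h2, τ₃, h3, hne12, hne13, hne23⟩ :=
      (Set.two_lt_ncard hTfin).mp hcon
    have hInfne : ∀ τ ∈ T, ∀ τ' ∈ T, τ ≠ τ' → sInf (M.J τ) ≠ sInf (M.J τ') := by
      intro τ hτ τ' hτ' hne heq
      have hl := (hIccT τ hτ).2
      have hl' := (hIccT τ' hτ').2
      rcases hsep τ hτ τ' hτ' hne with h | h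
      · linarith
      · linarith
    have d12 := hInfne τ₁ h1 τ₂ h2 hne12
    have d13 := hInfne τ₁ h1 τ₃ h3 hne13
    have d23 := hInfne τ₂ h2 τ₃ h3 hne23
    rcases d12.lt_or_gt with l12 | l21 <;> rcases d13.lt_or_gt with l13 | l31 <;>
      rcases d23.lt_or_gt with l23 | l32
    · exact hcore τ₁ h1 τ₂ h2 τ₃ h3 hne12 hne23 hne13 l12 l23
    · exact hcore τ₁ h1 τ₃ h3 τ₂ h2 hne13 (Ne.symm hne23) hne12 l13 l32
    · linarith
    · exact hcore τ₃ h3 τ₁ h1 τ₂ h2 (Ne.symm hne13) hne12 (Ne.symm hne23) l31 l12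
    · exact hcore τ₂ h2 τ₁ h1 τ₃ h3 (Ne.symm hne12) hne13 hne23 l21 l13
    · linarith
    · exact hcore τ₂ h2 τ₃ h3 τ₁ h1 hne23 (Ne.symm hne13) (Ne.symm hne12) l23 l31
    · exact hcore τ₃ h3 τ₂ h2 τ₁ h1 (Ne.symm hne23) (Ne.symm hne12) (Ne.symm hne13) l32 l21
  -- final counting
  set Tf : Finset (List ℕ) := hTfin.toFinset with hTf
  set Cf : Finset (List ℕ) :=
    (Tf ×ˢ Finset.range (n k)).image (fun p : List ℕ × ℕ => p.1 ++ [p.2]) with hCf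
  have hScf : {σ : List ℕ | σ.length = k ∧ IsWord n σ ∧ M.J σ ⊆ I} ⊆ ↑Cf := by
    rintro σ ⟨hσlen, hσw, hσI⟩
    have hne : σ ≠ [] := by intro h; rw [h] at hσlen; simp at hσlen; omega
    obtain ⟨τ, i, hσeq, hτlen, hτw, hi⟩ := word_decomp hne hσw
    rw [hσlen] at hi
    have hτT : τ ∈ T := by
      refine ⟨by omega, hτw, ?_⟩
      obtain ⟨a, b, hab, hIcc⟩ := M.J_closedInterval σ hσw
      have hxσ : a ∈ M.J σ := by rw [hIcc]; exact ⟨le_refl a, hab⟩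
      have hsubτ : M.J σ ⊆ M.J τ := by
        rw [hσeq]
        exact M.J_subset τ hτw i (by rw [show τ.length + 1 = k by omega]; exact hi)
      exact ⟨a, hsubτ hxσ, hσI hxσ⟩
    exact Finset.mem_coe.mpr (Finset.mem_image.mpr ⟨⟨τ, i⟩,
      Finset.mem_product.mpr ⟨hTfin.mem_toFinset.mpr hτT, Finset.mem_range.mpr hi⟩,
      hσeq.symm⟩)
  calc {σ : List ℕ | σ.length = k ∧ IsWord n σ ∧ M.J σ ⊆ I}.ncard
      ≤ (↑Cf : Set (List ℕ)).ncard := Set.ncard_le_ncard hScf Cf.finite_toSet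
    _ = Cf.card := Set.ncard_coe_finset Cf
    _ ≤ (Tf ×ˢ Finset.range (n k)).card := Finset.card_image_le
    _ = Tf.card * n k := by rw [Finset.card_product, Finset.card_range]
    _ ≤ 2 * n k := by
        apply Nat.mul_le_mul_right
        rw [← Set.ncard_eq_toFinset_card T hTfin]
        exact hT2
end
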